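/- If M ≥ 2N and f : [N] → ℂ is extended by zero to Z/MZ, then the ratio ‖f‖_{U²(Z/MZ)} / ‖1_{[N]}‖_{U²(Z/MZ)} is independent of the choice of M ≥ 2N. -/
import Mathlib

open Finset Complex

/-- The fourth power of the Gowers `U²(ℤ/Mℤ)` norm. -/
noncomputable def U2p4 (M : ℕ) [NeZero M] (f : ZMod M → ℂ) : ℂ :=
  (1 / (M : ℂ) ^ 3) * ∑ a : ZMod M, ∑ h₁ : ZMod M, ∑ h₂ : ZMod M,
    f a * (starRingEnd ℂ) (f (a + h₁)) * (starRingEnd ℂ) (f (a + h₂)) * f (a + h₁ + h₂)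

/-- The `U²(ℤ/Mℤ)` norm, defined as the fourth root of the (real, nonnegative)
Gowers expression. -/
noncomputable def u2norm (M : ℕ) [NeZero M] (f : ZMod M → ℂ) : ℝ :=
  (U2p4 M f).re ^ ((1 : ℝ) / 4)

/-- Extend a function on `[N] = {1,…,N}` by zero to `ℤ/Mℤ`. -/
def extendZ (N M : ℕ) (f : ℕ → ℂ) : ZMod M → ℂ :=
  fun x => if 1 ≤ x.val ∧ x.val ≤ N then f x.val else 0

lemma rpow_quarter_div (r : ℝ) {m : ℝ} (hm : 0 < m) :
    (r / m) ^ ((1:ℝ)/4) = r ^ ((1:ℝ)/4) / m ^ ((1:ℝ)/4) := by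
  rcases lt_trichotomy r 0 with hr | hr | hr
  · have hrm : r / m < 0 := div_neg_of_neg_of_pos hr hm
    rw [Real.rpow_def_of_neg hrm, Real.rpow_def_of_neg hr, Real.rpow_def_of_pos hm,
      Real.log_div hr.ne hm.ne', sub_mul, Real.exp_sub]
    ring
  · subst hr; rw [zero_div, Real.zero_rpow (by norm_num), zero_div]
  · exact Real.div_rpow hr.le hm.le _

lemma extend_cast {N M : ℕ} [NeZero M] (hNM : N < M) (f : ℕ → ℂ) {x : ℕ}
    (hx : x ∈ Icc 1 N) : extendZ N M f (x : ZMod M) = f x := by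
  obtain ⟨h1, h2⟩ := mem_Icc.mp hx
  have hv : (x : ZMod M).val = x := ZMod.val_cast_of_lt (lt_of_le_of_lt h2 hNM)
  simp [extendZ, hv, h1, h2]

lemma sum_extend_mul {N M : ℕ} [NeZero M] (hNM : N < M) (f : ℕ → ℂ) (H : ZMod M → ℂ) :
    ∑ a : ZMod M, extendZ N M f a * H a = ∑ x ∈ Icc 1 N, f x * H (x : ZMod M) := by
  classical
  have hinj : Set.InjOn (Nat.cast : ℕ → ZMod M) (Icc 1 N) := by
    intro x hx y hy hxy
    have hx' : x < M := lt_of_le_of_lt (mem_Icc.mp hx).2 hNM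
    have hy' : y < M := lt_of_le_of_lt (mem_Icc.mp hy).2 hNM
    have := congrArg ZMod.val hxy
    rwa [ZMod.val_cast_of_lt hx', ZMod.val_cast_of_lt hy'] at this
  calc ∑ a : ZMod M, extendZ N M f a * H a
      = ∑ a ∈ (Icc 1 N).image (Nat.cast : ℕ → ZMod M), extendZ N M f a * H a := by
        refine (Finset.sum_subset (Finset.subset_univ _) ?_).symm
        intro a _ ha
        have hz : extendZ N M f a = 0 := by
          unfold extendZ
          split
          · rename_i h
            exact absurd (Finset.mem_image.mpr ⟨a.val, mem_Icc.mpr ⟨h.1, h.2⟩,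
              by simp [ZMod.natCast_val, ZMod.cast_id]⟩) ha
          · rfl
        rw [hz, zero_mul]
    _ = ∑ x ∈ Icc 1 N, extendZ N M f (x : ZMod M) * H (x : ZMod M) :=
        Finset.sum_image (fun x hx y hy h => hinj hx hy h)
    _ = ∑ x ∈ Icc 1 N, f x * H (x : ZMod M) :=
        Finset.sum_congr rfl fun x hx => by rw [extend_cast hNM f hx]

lemma extend_sub {N M : ℕ} [NeZero M] (hM : 2 * N ≤ M) (f : ℕ → ℂ) {x y z : ℕ}
    (hx : x ∈ Icc 1 N) (hy : y ∈ Icc 1 N) (hz : z ∈ Icc 1 N) :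
    extendZ N M f ((y : ZMod M) + (z : ZMod M) - (x : ZMod M)) =
      if x < y + z ∧ y + z - x ≤ N then f (y + z - x) else 0 := by
  obtain ⟨hx1, hxN⟩ := mem_Icc.mp hx
  obtain ⟨hy1, hyN⟩ := mem_Icc.mp hy
  obtain ⟨hz1, hzN⟩ := mem_Icc.mp hz
  by_cases hlt : x < y + z
  · have hsub : (y : ZMod M) + (z : ZMod M) - (x : ZMod M) = ((y + z - x : ℕ) : ZMod M) := by
      push_cast [Nat.cast_sub hlt.le]
      ring
    rw [hsub]
    have hw : y + z - x < M := by omega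
    have hv : ((y + z - x : ℕ) : ZMod M).val = y + z - x := ZMod.val_cast_of_lt hw
    have h1 : 1 ≤ y + z - x := by omega
    by_cases hN' : y + z - x ≤ N
    · simp [extendZ, hv, h1, hN', hlt]
    · simp [extendZ, hv, hN', hlt]
  · rw [if_neg (fun h => hlt h.1)]
    have hx' : x = y + z + (x - (y + z)) := by omega
    set d := x - (y + z) with hd
    have harg : (y : ZMod M) + (z : ZMod M) - (x : ZMod M) = -(d : ZMod M) := by
      rw [hx']
      push_cast
      ring
    rw [harg]
    rcases Nat.eq_zero_or_pos d with h0 | hdpos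
    · simp [h0, extendZ]
    · have hdM : d ≤ M := by omega
      have hneg : -(d : ZMod M) = ((M - d : ℕ) : ZMod M) := by
        push_cast [Nat.cast_sub hdM]
        simp [ZMod.natCast_self]
      rw [hneg]
      have h1 : M - d < M := by omega
      have hv : ((M - d : ℕ) : ZMod M).val = M - d := ZMod.val_cast_of_lt h1
      have hgt : ¬ (M - d ≤ N) := by omega
      simp [extendZ, hv, hgt]

lemma extend_conj {N M : ℕ} (f : ℕ → ℂ) (b : ZMod M) :
    (starRingEnd ℂ) (extendZ N M f b) = extendZ N M (fun n => (starRingEnd ℂ) (f n)) b := by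
  simp [extendZ, apply_ite (starRingEnd ℂ)]

lemma key_sum {N M : ℕ} [NeZero M] (hN : 0 < N) (hM : 2 * N ≤ M) (f : ℕ → ℂ) :
    (∑ a : ZMod M, ∑ h₁ : ZMod M, ∑ h₂ : ZMod M,
      extendZ N M f a * (starRingEnd ℂ) (extendZ N M f (a + h₁)) *
        (starRingEnd ℂ) (extendZ N M f (a + h₂)) * extendZ N M f (a + h₁ + h₂)) =
    ∑ x ∈ Icc 1 N, f x * ∑ y ∈ Icc 1 N, (starRingEnd ℂ) (f y) *
      ∑ z ∈ Icc 1 N, (starRingEnd ℂ) (f z) *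
        (if x < y + z ∧ y + z - x ≤ N then f (y + z - x) else 0) := by
  have hNM : N < M := by omega
  calc (∑ a : ZMod M, ∑ h₁ : ZMod M, ∑ h₂ : ZMod M,
      extendZ N M f a * (starRingEnd ℂ) (extendZ N M f (a + h₁)) *
        (starRingEnd ℂ) (extendZ N M f (a + h₂)) * extendZ N M f (a + h₁ + h₂))
      = ∑ a : ZMod M, extendZ N M f a * ∑ b : ZMod M, (starRingEnd ℂ) (extendZ N M f b) *
          ∑ c : ZMod M, (starRingEnd ℂ) (extendZ N M f c) * extendZ N M f (b + c - a) := by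
        refine Finset.sum_congr rfl fun a _ => ?_
        rw [Finset.mul_sum]
        refine Fintype.sum_equiv (Equiv.addLeft a) _ _ fun h₁ => ?_
        rw [Finset.mul_sum, Finset.mul_sum]
        refine Fintype.sum_equiv (Equiv.addLeft a) _ _ fun h₂ => ?_
        have harg : (a + h₁) + (a + h₂) - a = a + h₁ + h₂ := by ring
        simp only [Equiv.coe_addLeft, harg]
        ring
    _ = ∑ x ∈ Icc 1 N, f x * ∑ y ∈ Icc 1 N, (starRingEnd ℂ) (f y) *
          ∑ z ∈ Icc 1 N, (starRingEnd ℂ) (f z) *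
            (if x < y + z ∧ y + z - x ≤ N then f (y + z - x) else 0) := by
        rw [sum_extend_mul hNM f]
        refine Finset.sum_congr rfl fun x hx => ?_
        congr 1
        simp only [extend_conj f]
        rw [sum_extend_mul hNM (fun n => (starRingEnd ℂ) (f n))]
        refine Finset.sum_congr rfl fun y hy => ?_
        congr 1
        rw [sum_extend_mul hNM (fun n => (starRingEnd ℂ) (f n))]
        refine Finset.sum_congr rfl fun z hz => ?_
        congr 1
        exact extend_sub hM f hx hy hz

lemma u2norm_extend {N M : ℕ} [NeZero M] (hN : 0 < N) (hM : 2 * N ≤ M) (f : ℕ → ℂ) :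
    u2norm M (extendZ N M f) =
      (∑ x ∈ Icc 1 N, f x * ∑ y ∈ Icc 1 N, (starRingEnd ℂ) (f y) *
        ∑ z ∈ Icc 1 N, (starRingEnd ℂ) (f z) *
          (if x < y + z ∧ y + z - x ≤ N then f (y + z - x) else 0)).re ^ ((1:ℝ)/4) /
        ((M : ℝ) ^ 3) ^ ((1:ℝ)/4) := by
  have hMpos : (0:ℝ) < (M : ℝ) ^ 3 := by
    have : (0:ℝ) < (M:ℝ) := by exact_mod_cast Nat.pos_of_ne_zero (NeZero.ne M)
    positivity
  unfold u2norm U2p4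
  rw [key_sum hN hM f]
  set T : ℂ := ∑ x ∈ Icc 1 N, f x * ∑ y ∈ Icc 1 N, (starRingEnd ℂ) (f y) *
        ∑ z ∈ Icc 1 N, (starRingEnd ℂ) (f z) *
          (if x < y + z ∧ y + z - x ≤ N then f (y + z - x) else 0) with hT
  have hc : (1 / (M : ℂ) ^ 3) = (((1 / (M:ℝ)^3 : ℝ)) : ℂ) := by push_cast; ring
  rw [hc, Complex.re_ofReal_mul]
  rw [show (1 / (M:ℝ)^3) * T.re = T.re / (M:ℝ)^3 by ring]
  exact rpow_quarter_div T.re hMpos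

/-- The normalized ratio `‖f‖_{U²(ℤ/Mℤ)} / ‖1_{[N]}‖_{U²(ℤ/Mℤ)}` is independent of the
choice of `M ≥ 2N`. -/
theorem u2_ratio_independent_of_M (N M₁ M₂ : ℕ) [NeZero M₁] [NeZero M₂]
    (hN : 0 < N) (h₁ : 2 * N ≤ M₁) (h₂ : 2 * N ≤ M₂) (f : ℕ → ℂ) :
    u2norm M₁ (extendZ N M₁ f) / u2norm M₁ (extendZ N M₁ (fun _ => 1)) =
      u2norm M₂ (extendZ N M₂ f) / u2norm M₂ (extendZ N M₂ (fun _ => 1)) := by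
  have cancel : ∀ (M : ℕ) [NeZero M], 2 * N ≤ M →
      u2norm M (extendZ N M f) / u2norm M (extendZ N M (fun _ => 1)) =
      (∑ x ∈ Icc 1 N, f x * ∑ y ∈ Icc 1 N, (starRingEnd ℂ) (f y) *
        ∑ z ∈ Icc 1 N, (starRingEnd ℂ) (f z) *
          (if x < y + z ∧ y + z - x ≤ N then f (y + z - x) else 0)).re ^ ((1:ℝ)/4) /
      (∑ x ∈ Icc 1 N, (fun _ => (1:ℂ)) x * ∑ y ∈ Icc 1 N,
          (starRingEnd ℂ) ((fun _ => (1:ℂ)) y) *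
        ∑ z ∈ Icc 1 N, (starRingEnd ℂ) ((fun _ => (1:ℂ)) z) *
          (if x < y + z ∧ y + z - x ≤ N then (fun _ => (1:ℂ)) (y + z - x) else 0)).re ^
            ((1:ℝ)/4) := by
    intro M _ hM
    rw [u2norm_extend hN hM f, u2norm_extend hN hM (fun _ => 1)]
    have hMpos : (0:ℝ) < (M : ℝ) ^ 3 := by
      have : (0:ℝ) < (M:ℝ) := by exact_mod_cast Nat.pos_of_ne_zero (NeZero.ne M)
      positivity
    have hc : ((M : ℝ) ^ 3) ^ ((1:ℝ)/4) ≠ 0 := by positivity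
    rw [div_div_div_cancel_right₀]
    exact hc
  rw [cancel M₁ h₁, cancel M₂ h₂]
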